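/- Let n ≥ 1 and let c be a linear automorphism of the ℚ-vector space ℚ^n (functions Fin n → ℚ). Suppose there is a vector ν ∈ ℚ^n with ν(i) > 0 for every coordinate i, such that c(ν) = ν, and suppose there is an integer m ≥ 1 such that for every y ∈ ℚ^n the vector c^m(y) − y lies in the line ℚ·ν (i.e., the automorphism induced by c on ℚ^n/ℚν has order dividing m). If x ∈ ℚ^n satisfies (c^t(x))(i) ≥ 0 for every integer t ∈ ℤ and every coordinate i, then c^m(x) = x. -/

import Mathlib

/-- Let `n ≥ 1` and let `c` be a linear automorphism of `ℚ^n`.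
Suppose there is a strictly positive vector `ν` fixed by `c`, and an integer `m ≥ 1`
such that for every `y` the vector `c^m y - y` lies in the line `ℚ • ν` (i.e. the
automorphism induced by `c` on `ℚ^n/ℚν` has order dividing `m`). If `x` satisfies
`(c^t x) i ≥ 0` for every integer `t` and every coordinate `i`, then `c^m x = x`. -/
theorem pow_fixed_of_forall_zpow_nonneg
    (n : ℕ) (hn : 1 ≤ n) (c : (Fin n → ℚ) ≃ₗ[ℚ] (Fin n → ℚ))
    (ν : Fin n → ℚ) (hν : ∀ i, 0 < ν i) (hfix : c ν = ν)
    (m : ℕ) (hm : 1 ≤ m)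
    (hper : ∀ y : Fin n → ℚ, ∃ q : ℚ, (c ^ m) y - y = q • ν)
    (x : Fin n → ℚ) (hx : ∀ (t : ℤ) (i : Fin n), 0 ≤ ((c ^ t) x) i) :
    (c ^ m) x = x := by
  obtain ⟨q, hq⟩ := hper x
  have hqx : (c ^ m) x = x + q • ν := by
    have := hq; linear_combination (norm := module) this
  -- c⁻¹ fixes ν
  have hfix' : c.symm ν = ν := by
    conv_lhs => rw [← hfix]
    exact c.symm_apply_apply ν
  -- every integer power fixes ν
  have hfixz : ∀ t : ℤ, (c ^ t) ν = ν := by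
    intro t
    induction t using Int.induction_on with
    | zero => simp
    | succ k ih =>
        rw [zpow_add_one]
        show (c ^ (k : ℤ)) (c ν) = ν
        rw [hfix, ih]
    | pred k ih =>
        rw [zpow_sub_one]
        show (c ^ (-(k : ℤ))) (c⁻¹ ν) = ν
        have h3 : c⁻¹ ν = ν := hfix'
        rw [h3, ih]
  -- key: c^(m*k) x = x + (k*q) • ν for all k : ℤ
  have key : ∀ k : ℤ, (c ^ ((m : ℤ) * k)) x = x + ((k : ℚ) * q) • ν := by
    intro k
    induction k using Int.induction_on with
    | zero => simp
    | succ k ih =>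
        have h1 : c ^ ((m : ℤ) * ((k : ℤ) + 1)) = c ^ (m : ℤ) * c ^ ((m : ℤ) * k) := by
          rw [← zpow_add]; ring_nf
        rw [h1]
        show (c ^ (m : ℤ)) ((c ^ ((m : ℤ) * k)) x) = _
        rw [ih]
        have hcm : c ^ (m : ℤ) = c ^ m := zpow_natCast c m
        rw [hcm, map_add, hqx, map_smul]
        have : (c ^ m) ν = ν := by rw [← hcm]; exact hfixz m
        rw [this]
        push_cast
        module
    | pred k ih =>
        have h1 : c ^ ((m : ℤ) * (-(k : ℤ) - 1)) = (c ^ (m : ℤ))⁻¹ * c ^ ((m : ℤ) * (-(k : ℤ))) := by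
          rw [← zpow_neg, ← zpow_add]; ring_nf
        rw [h1]
        show (c ^ (m : ℤ))⁻¹ ((c ^ ((m : ℤ) * (-(k : ℤ)))) x) = _
        rw [ih]
        have hcm : c ^ (m : ℤ) = c ^ m := zpow_natCast c m
        have hνm : (c ^ (m : ℤ)) ν = ν := hfixz m
        have hfwd : (c ^ (m : ℤ)) (x + (((-(k : ℤ) - 1 : ℤ) : ℚ) * q) • ν)
            = x + (((-(k : ℤ) : ℤ) : ℚ) * q) • ν := by
          rw [map_add, map_smul, hcm, hqx, ← hcm, hνm]
          push_cast
          module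
        have hinv : (c ^ (m : ℤ))⁻¹ ((c ^ (m : ℤ)) (x + (((-(k : ℤ) - 1 : ℤ) : ℚ) * q) • ν))
            = x + (((-(k : ℤ) - 1 : ℤ) : ℚ) * q) • ν := by
          have h2 : (c ^ (m : ℤ))⁻¹ * (c ^ (m : ℤ)) = 1 := inv_mul_cancel _
          calc (c ^ (m : ℤ))⁻¹ ((c ^ (m : ℤ)) _)
              = ((c ^ (m : ℤ))⁻¹ * (c ^ (m : ℤ))) _ := rfl
            _ = _ := by rw [h2]; rfl
        rw [hfwd] at hinv
        rw [hinv]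
  -- now show q = 0
  have hq0 : q = 0 := by
    by_contra hq0
    set i : Fin n := ⟨0, hn⟩
    obtain ⟨N, hN⟩ := exists_nat_gt (x i / (|q| * ν i))
    set k : ℤ := if 0 < q then -(N : ℤ) else N with hk
    have hkq : (k : ℚ) * q = -(N : ℚ) * |q| := by
      rcases lt_trichotomy q 0 with h|h|h
      · rw [hk, if_neg (by linarith), abs_of_neg h]; push_cast; ring
      · exact absurd h hq0
      · rw [hk, if_pos h, abs_of_pos h]; push_cast; ring
    have h1 := hx ((m : ℤ) * k) i
    rw [key k] at h1
    have h2 : (x + ((k : ℚ) * q) • ν) i = x i + ((k : ℚ) * q) * ν i := rfl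
    rw [h2, hkq] at h1
    have hqpos : 0 < |q| := abs_pos.mpr hq0
    have hνi := hν i
    have : x i / (|q| * ν i) < N := hN
    have hlt : x i < (N : ℚ) * |q| * ν i := by
      rw [div_lt_iff₀ (by positivity)] at this
      calc x i < (N : ℚ) * (|q| * ν i) := this
        _ = (N : ℚ) * |q| * ν i := by ring
    nlinarith [h1]
  rw [hq0] at hqx
  simpa using hqx
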